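/- arXiv:1409.4589 — 2 statements merged into one kernel-verified Lean document; each statement's English description precedes it below -/
import Mathlib

section
/- For every integer d ≥ 2, the cortex of 𝔤_d* is the projective algebraic set Cor(𝔤_d*) = {ℓ ∈ 𝔤_d* : ℓ(Z_1) = ⋯ = ℓ(Z_d) = 0 and Q_d(ℓ(Y_1), …, ℓ(Y_{2d})) = 0}, where Q_d is the homogeneous polynomial of degree d given by Q_d(η_1,…,η_{2d}) = η_{2d−1}·Σ_{i=1}^{d−1}(η_{2i}·∏_{j=1, j≠i}^{d−1} η_{2j−1}) − η_{2d}·∏_{j=1}^{d−1} η_{2j−1}. -/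
/-- The coadjoint action of the Lie algebra: `(coad X f) W = f ⁅W, X⁆`. -/
def coad {L : Type*} [LieRing L] [LieAlgebra ℝ L] (X : L) (f : Module.Dual ℝ L) :
    Module.Dual ℝ L where
  toFun W := f ⁅W, X⁆
  map_add' a b := by simp [add_lie]
  map_smul' c a := by simp [smul_lie]

/-- The set `{ad*_X ℓ : X ∈ 𝔤, ℓ ∈ 𝔤*}` of all coadjoint tangent vectors. -/
def adStar (L : Type*) [LieRing L] [LieAlgebra ℝ L] : Set (Module.Dual ℝ L) :=
  {g | ∃ (X : L) (ℓ : Module.Dual ℝ L), g = coad X ℓ}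

/-- Coordinates of a linear functional with respect to the dual basis of `B`;
this identifies `𝔤*` with `ι → ℝ`, carrying the canonical topology. -/
noncomputable def coords {ι : Type*} {L : Type*} [LieRing L] [LieAlgebra ℝ L]
    (B : Module.Basis ι ℝ L) (f : Module.Dual ℝ L) : ι → ℝ := fun a => f (B a)

/-- The cortex `Cor(𝔤*)`: the closure (in the canonical topology of the
finite-dimensional space `𝔤*`, transported to coordinates via the dual basis)
of the set `{ad*_X ℓ : X ∈ 𝔤, ℓ ∈ 𝔤*}`. -/
def corSet {ι : Type*} {L : Type*} [LieRing L] [LieAlgebra ℝ L] (B : Module.Basis ι ℝ L) :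
    Set (Module.Dual ℝ L) :=
  {f | coords B f ∈ closure (coords B '' adStar L)}

/-- Index type for the basis of `𝔤_d`: first component indexes `Z_1,…,Z_d`, the second
the odd `Y`'s `Y_1, Y_3, …, Y_{2d-1}`, the third the even `Y`'s `Y_2, Y_4, …, Y_{2d}`,
and the fourth `X_1,…,X_d`. -/
abbrev Idx (d : ℕ) : Type := Fin d ⊕ (Fin d ⊕ (Fin d ⊕ Fin d))

/-- Index of `Z_{i+1}`. -/
def zI {d : ℕ} (i : Fin d) : Idx d := Sum.inl i
/-- Index of `Y_{2i+1}` (odd-indexed `Y`). -/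
def yoI {d : ℕ} (i : Fin d) : Idx d := Sum.inr (Sum.inl i)
/-- Index of `Y_{2i+2}` (even-indexed `Y`). -/
def yeI {d : ℕ} (i : Fin d) : Idx d := Sum.inr (Sum.inr (Sum.inl i))
/-- Index of `X_{i+1}`. -/
def xI {d : ℕ} (i : Fin d) : Idx d := Sum.inr (Sum.inr (Sum.inr i))

/-- Value of `⁅X_{i+1}, Y_{2i+2}⁆`: `Z_{i+2}` if `i + 1 < d`, and `Z_2 + ⋯ + Z_d`
if `i + 1 = d`. -/
def gdW {d : ℕ} (hd : 2 ≤ d) {V : Type*} [AddCommGroup V] (B : Idx d → V) (i : Fin d) : V :=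
  if h : (i : ℕ) < d - 1 then B (zI ⟨(i : ℕ) + 1, by omega⟩)
  else ∑ m ∈ Finset.univ.filter (fun m : Fin d => 0 < (m : ℕ)), B (zI m)

/-- The bracket `⁅B a, B b⁆` of two basis vectors of `𝔤_d`, given by the structure
constants: `⁅X_i, Y_{2i-1}⁆ = Z_1` for `i = 1,…,d`, `⁅X_k, Y_{2k}⁆ = Z_{k+1}` for
`k = 1,…,d-1`, `⁅X_d, Y_{2d}⁆ = Z_2 + ⋯ + Z_d`, all other brackets of basis
vectors being zero (up to antisymmetry). -/
def gdBr {d : ℕ} (hd : 2 ≤ d) {V : Type*} [AddCommGroup V] (B : Idx d → V) :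
    Idx d → Idx d → V
  | Sum.inr (Sum.inr (Sum.inr i)), Sum.inr (Sum.inl j) =>
      if i = j then B (zI ⟨0, by omega⟩) else 0
  | Sum.inr (Sum.inl j), Sum.inr (Sum.inr (Sum.inr i)) =>
      if i = j then -(B (zI ⟨0, by omega⟩)) else 0
  | Sum.inr (Sum.inr (Sum.inr i)), Sum.inr (Sum.inr (Sum.inl j)) =>
      if i = j then gdW hd B i else 0
  | Sum.inr (Sum.inr (Sum.inl j)), Sum.inr (Sum.inr (Sum.inr i)) =>
      if i = j then -(gdW hd B i) else 0
  | _, _ => 0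

/-- The homogeneous polynomial `Q_d` of degree `d`, evaluated at the odd coordinates
`ηo` (`ηo i = η_{2i+1}`) and the even coordinates `ηe` (`ηe i = η_{2i+2}`):
`Q_d = η_{2d-1}·Σ_{i=1}^{d-1}(η_{2i}·∏_{j=1, j≠i}^{d-1} η_{2j-1})
      − η_{2d}·∏_{j=1}^{d-1} η_{2j-1}`. -/
def Qd (d : ℕ) (hd : 2 ≤ d) (ηo ηe : Fin d → ℝ) : ℝ :=
  ηo ⟨d - 1, by omega⟩ *
      (∑ i ∈ Finset.univ.filter (fun i : Fin d => (i : ℕ) < d - 1),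
        ηe i * ∏ j ∈ Finset.univ.filter (fun j : Fin d => (j : ℕ) < d - 1 ∧ j ≠ i), ηo j)
    - ηe ⟨d - 1, by omega⟩ *
        ∏ j ∈ Finset.univ.filter (fun j : Fin d => (j : ℕ) < d - 1), ηo j

open Finset

variable {d : ℕ}

def sS (d : ℕ) : Finset (Fin d) := Finset.univ.filter (fun j : Fin d => (j : ℕ) < d - 1)

def kk (d : ℕ) (hd : 2 ≤ d) : Fin d := ⟨d - 1, by omega⟩

lemma filter_ne_eq_erase (hd : 2 ≤ d) (i : Fin d) :
    Finset.univ.filter (fun j : Fin d => (j : ℕ) < d - 1 ∧ j ≠ i) = (sS d).erase i := by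
  ext j; simp [sS, Finset.mem_erase, and_comm]

lemma mem_sS {j : Fin d} : j ∈ sS d ↔ (j : ℕ) < d - 1 := by simp [sS]

lemma sS_nonempty (hd : 2 ≤ d) : (sS d).Nonempty :=
  ⟨⟨0, by omega⟩, mem_sS.2 (by simpa using by omega)⟩

lemma kk_not_mem_sS (hd : 2 ≤ d) : kk d hd ∉ sS d := by
  rw [mem_sS]; simp [kk]

lemma mem_sS_or_eq (hd : 2 ≤ d) (j : Fin d) : j ∈ sS d ∨ j = kk d hd := by
  rw [mem_sS]
  rcases lt_or_ge (j : ℕ) (d - 1) with h | h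
  · exact Or.inl h
  · exact Or.inr (Fin.ext (by show (j : ℕ) = d - 1; have := j.isLt; omega))

lemma sum_shift (hd : 2 ≤ d) (z z' : Fin d → ℝ)
    (hz : ∀ j : Fin d, (j : ℕ) < d - 1 → ∀ (h : (j : ℕ) + 1 < d), z' j = z ⟨(j : ℕ) + 1, h⟩) :
    ∑ j ∈ sS d, z' j = ∑ m ∈ Finset.univ.filter (fun m : Fin d => 0 < (m : ℕ)), z m := by
  apply Finset.sum_nbij' (i := fun a : Fin d => (⟨((a : ℕ) + 1) % d, Nat.mod_lt _ (by omega)⟩ : Fin d))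
    (j := fun b : Fin d => (⟨(b : ℕ) - 1, Nat.lt_of_le_of_lt (Nat.sub_le _ _) b.isLt⟩ : Fin d))
  · intro a ha; rw [mem_sS] at ha
    simp [Finset.mem_filter, Nat.mod_eq_of_lt (by omega : (a : ℕ) + 1 < d)]
  · intro b hb; simp only [Finset.mem_filter, Finset.mem_univ, true_and] at hb
    rw [mem_sS]; have := b.isLt; simp; omega
  · intro a ha; rw [mem_sS] at ha; ext
    simp [Nat.mod_eq_of_lt (by omega : (a : ℕ) + 1 < d)]
  · intro b hb; simp only [Finset.mem_filter, Finset.mem_univ, true_and] at hb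
    ext; have := b.isLt; simp [Nat.mod_eq_of_lt (by omega : (b : ℕ) - 1 + 1 < d)]; omega
  · intro a ha; rw [mem_sS] at ha
    rw [hz a ha (by omega)]
    congr 1
    exact Fin.ext (by simp [Nat.mod_eq_of_lt (by omega : (a : ℕ) + 1 < d)])

lemma Qd_eq (hd : 2 ≤ d) (ηo ηe : Fin d → ℝ) :
    Qd d hd ηo ηe = ηo (kk d hd) * (∑ i ∈ sS d, ηe i * ∏ j ∈ (sS d).erase i, ηo j)
      - ηe (kk d hd) * ∏ j ∈ sS d, ηo j := by
  unfold Qd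
  simp only [filter_ne_eq_erase hd]
  rfl

lemma Qzero (hd : 2 ≤ d) (α w : Fin d → ℝ) (t : ℝ)
    (hw : w (kk d hd) = ∑ j ∈ sS d, w j) :
    Qd d hd (fun j => α j * t) (fun j => α j * w j) = 0 := by
  rw [Qd_eq hd]
  obtain ⟨c, hc⟩ : ∃ c, (sS d).card = c + 1 :=
    ⟨_, (Nat.succ_pred_eq_of_pos (Finset.card_pos.mpr (sS_nonempty hd))).symm⟩
  have h1 : ∀ i ∈ sS d, (α i * w i) * ∏ j ∈ (sS d).erase i, (α j * t)
      = w i * ((∏ j ∈ sS d, α j) * t ^ c) := by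
    intro i hi
    rw [Finset.prod_mul_distrib, Finset.prod_const, Finset.card_erase_of_mem hi, hc]
    simp only [Nat.add_sub_cancel]
    calc (α i * w i) * ((∏ j ∈ (sS d).erase i, α j) * t ^ c)
        = w i * ((α i * ∏ j ∈ (sS d).erase i, α j) * t ^ c) := by ring
      _ = w i * ((∏ j ∈ sS d, α j) * t ^ c) := by rw [Finset.mul_prod_erase _ _ hi]
  rw [Finset.sum_congr rfl h1, ← Finset.sum_mul, Finset.prod_mul_distrib, Finset.prod_const,
    hc, ← hw, pow_succ]
  ring

lemma div_of_Q (hd : 2 ≤ d) (ηo ηe : Fin d → ℝ) (hz : ∀ j, ηo j ≠ 0)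
    (hQ : Qd d hd ηo ηe = 0) :
    ∑ j ∈ sS d, ηe j / ηo j = ηe (kk d hd) / ηo (kk d hd) := by
  rw [Qd_eq hd] at hQ
  have hP : (∏ j ∈ sS d, ηo j) ≠ 0 := Finset.prod_ne_zero_iff.2 fun j _ => hz j
  have hA : ∑ i ∈ sS d, ηe i * ∏ j ∈ (sS d).erase i, ηo j
      = (∑ j ∈ sS d, ηe j / ηo j) * ∏ j ∈ sS d, ηo j := by
    rw [Finset.sum_mul]
    refine Finset.sum_congr rfl fun i hi => ?_
    rw [← Finset.mul_prod_erase _ ηo hi, div_mul_eq_mul_div, eq_div_iff (hz i)]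
    ring
  rw [hA, sub_eq_zero] at hQ
  have h2 : ηo (kk d hd) * (∑ j ∈ sS d, ηe j / ηo j) = ηe (kk d hd) := by
    have := mul_right_cancel₀ hP (by linarith [hQ] : (ηo (kk d hd) * ∑ j ∈ sS d, ηe j / ηo j) * ∏ j ∈ sS d, ηo j = ηe (kk d hd) * ∏ j ∈ sS d, ηo j)
    exact this
  rw [eq_div_iff (hz _)]
  linarith [h2]

lemma fact1 (hd : 2 ≤ d) (ηo ηe : Fin d → ℝ) (hQ : Qd d hd ηo ηe = 0)
    (h : ∀ j ∈ sS d, ηo j ≠ 0) (hk : ηo (kk d hd) = 0) : ηe (kk d hd) = 0 := by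
  rw [Qd_eq hd, hk] at hQ
  have hP : (∏ j ∈ sS d, ηo j) ≠ 0 := Finset.prod_ne_zero_iff.2 h
  simp only [zero_mul, zero_sub, neg_eq_zero, mul_eq_zero] at hQ
  tauto

lemma fact2 (hd : 2 ≤ d) (ηo ηe : Fin d → ℝ) (hQ : Qd d hd ηo ηe = 0)
    (j1 : Fin d) (hj1 : j1 ∈ sS d) (h : ∀ j, j ≠ j1 → ηo j ≠ 0) (hj0 : ηo j1 = 0) :
    ηe j1 = 0 := by
  rw [Qd_eq hd] at hQ
  have hP : (∏ j ∈ sS d, ηo j) = 0 := Finset.prod_eq_zero hj1 hj0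
  have hS : ∑ i ∈ sS d, ηe i * ∏ j ∈ (sS d).erase i, ηo j
      = ηe j1 * ∏ j ∈ (sS d).erase j1, ηo j := by
    refine Finset.sum_eq_single j1 (fun i hi hne => ?_) (fun hni => absurd hj1 hni)
    exact mul_eq_zero_of_right _ (Finset.prod_eq_zero (Finset.mem_erase.2 ⟨Ne.symm hne, hj1⟩) hj0)
  rw [hS, hP, mul_zero, sub_zero, mul_eq_zero, mul_eq_zero] at hQ
  have hkj : kk d hd ≠ j1 := fun he => kk_not_mem_sS hd (he ▸ hj1)
  have h1 : ηo (kk d hd) ≠ 0 := h _ hkj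
  have h2 : (∏ j ∈ (sS d).erase j1, ηo j) ≠ 0 :=
    Finset.prod_ne_zero_iff.2 fun j hj => h j (Finset.mem_erase.1 hj).1
  tauto

lemma solv (hd : 2 ≤ d) (α ηe : Fin d → ℝ) (h0 : ∀ j, α j = 0 → ηe j = 0)
    (h1 : (∃ j, α j = 0) ∨ ∑ j ∈ sS d, ηe j / α j = ηe (kk d hd) / α (kk d hd)) :
    ∃ w : Fin d → ℝ, (∀ j, α j * w j = ηe j) ∧ w (kk d hd) = ∑ j ∈ sS d, w j := by
  by_cases hz : ∃ j, α j = 0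
  · obtain ⟨j1', hj1'⟩ := hz
    by_cases hk : α (kk d hd) = 0
    · refine ⟨fun j => if j = kk d hd then (∑ j' ∈ sS d, if α j' = 0 then 0 else ηe j' / α j')
        else (if α j = 0 then 0 else ηe j / α j), fun j => ?_, ?_⟩
      · by_cases hjk : j = kk d hd
        · subst hjk; simp [hk, h0 _ hk]
        · simp only [if_neg hjk]
          by_cases hja : α j = 0
          · simp [hja, h0 _ hja]
          · rw [if_neg hja]; field_simp
      · simp only [if_pos rfl]
        exact Finset.sum_congr rfl fun j hj =>
          (if_neg (fun he => kk_not_mem_sS hd (by rw [← he]; exact hj))).symm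
    · have hj1s : j1' ∈ sS d :=
        (mem_sS_or_eq hd j1').resolve_right (fun he => hk (by rw [← he]; exact hj1'))
      set b : Fin d → ℝ := fun j => if α j = 0 then 0 else ηe j / α j with hb
      refine ⟨fun j => if j = j1' then b (kk d hd) - ∑ j' ∈ (sS d).erase j1', b j'
        else b j, fun j => ?_, ?_⟩
      · beta_reduce
        by_cases hj : j = j1'
        · subst hj; simp [hj1', h0 _ hj1']
        · rw [if_neg hj, hb]
          by_cases hja : α j = 0
          · simp [hja, h0 _ hja]
          · simp only [if_neg hja]; field_simp
      · have hkne : kk d hd ≠ j1' := fun he => kk_not_mem_sS hd (by rw [he]; exact hj1s)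
        beta_reduce
        rw [if_neg hkne, ← Finset.add_sum_erase _ _ hj1s, if_pos rfl,
          Finset.sum_congr rfl (fun j hj => if_neg (Finset.mem_erase.1 hj).1)]
        ring
  · push_neg at hz
    have h1' := h1.resolve_left (fun ⟨j, hj⟩ => hz j hj)
    exact ⟨fun j => ηe j / α j, fun j => by field_simp [hz j], h1'.symm⟩

def pt {d : ℕ} (α w ξ : Fin d → ℝ) : Idx d → ℝ :=
  Sum.elim (fun _ => 0) (Sum.elim α (Sum.elim (fun j => α j * w j) ξ))

section RowLemmas
variable {d : ℕ} (hd : 2 ≤ d) {V : Type*} [AddCommGroup V] (Bf : Idx d → V)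

lemma gdBr_z (i : Fin d) (u : Idx d) : gdBr hd Bf (zI i) u = 0 := by
  rcases u with i' | j' | j' | j' <;> rfl

lemma gdBr_yo_x (m j : Fin d) :
    gdBr hd Bf (yoI m) (xI j) = if j = m then -(Bf (zI ⟨0, by omega⟩)) else 0 := rfl

lemma gdBr_yo_z (m j : Fin d) : gdBr hd Bf (yoI m) (zI j) = 0 := rfl
lemma gdBr_yo_yo (m j : Fin d) : gdBr hd Bf (yoI m) (yoI j) = 0 := rfl
lemma gdBr_yo_ye (m j : Fin d) : gdBr hd Bf (yoI m) (yeI j) = 0 := rfl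

lemma gdBr_ye_x (m j : Fin d) :
    gdBr hd Bf (yeI m) (xI j) = if j = m then -(gdW hd Bf j) else 0 := rfl
lemma gdBr_ye_z (m j : Fin d) : gdBr hd Bf (yeI m) (zI j) = 0 := rfl
lemma gdBr_ye_yo (m j : Fin d) : gdBr hd Bf (yeI m) (yoI j) = 0 := rfl
lemma gdBr_ye_ye (m j : Fin d) : gdBr hd Bf (yeI m) (yeI j) = 0 := rfl

lemma gdBr_x_yo (m j : Fin d) :
    gdBr hd Bf (xI m) (yoI j) = if m = j then Bf (zI ⟨0, by omega⟩) else 0 := rfl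
lemma gdBr_x_ye (m j : Fin d) :
    gdBr hd Bf (xI m) (yeI j) = if m = j then gdW hd Bf m else 0 := rfl
lemma gdBr_x_z (m j : Fin d) : gdBr hd Bf (xI m) (zI j) = 0 := rfl
lemma gdBr_x_x (m j : Fin d) : gdBr hd Bf (xI m) (xI j) = 0 := rfl

end RowLemmas

lemma lie_sum' {L : Type} [LieRing L] [LieAlgebra ℝ L] {ι : Type*} (s : Finset ι)
    (x : L) (f : ι → L) : ⁅x, ∑ i ∈ s, f i⁆ = ∑ i ∈ s, ⁅x, f i⁆ := by
  induction s using Finset.cons_induction with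
  | empty => simp
  | cons a s ha ih => rw [Finset.sum_cons, Finset.sum_cons, lie_add, ih]

section Lie
variable {d : ℕ} {L : Type} [LieRing L] [LieAlgebra ℝ L]

lemma realize (hd : 2 ≤ d) (B : Module.Basis (Idx d) ℝ L)
    (hbr : ∀ a b : Idx d, ⁅B a, B b⁆ = gdBr hd (fun c => B c) a b)
    (α w ξ : Fin d → ℝ) (hw : w (kk d hd) = ∑ j ∈ sS d, w j) :
    pt α w ξ ∈ coords B '' adStar L := by
  classical
  set vv : Fin d → ℝ := fun i => if (i : ℕ) = 0 then 1
    else w ⟨(i : ℕ) - 1, Nat.lt_of_le_of_lt (Nat.sub_le _ _) i.isLt⟩ with hvv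
  set ℓ : Module.Dual ℝ L := ∑ i : Fin d, vv i • B.coord (zI i) with hℓ
  set X : L := ∑ j : Fin d, ((-(α j)) • B (xI j) + ξ j • B (yoI j)) with hX
  have hlb : ∀ u : Idx d, ℓ (B u) = ∑ i : Fin d, vv i * (if u = zI i then 1 else 0) := by
    intro u
    rw [hℓ]
    simp [Module.Basis.coord_apply, Module.Basis.repr_self, Finsupp.single_apply]
  have hlz : ∀ i : Fin d, ℓ (B (zI i)) = vv i := by
    intro i
    rw [hlb]
    simp [zI]
  have hlz0 : ∀ p : 0 < d, ℓ (B (zI ⟨0, p⟩)) = 1 := by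
    intro p; rw [hlz]; simp [hvv]
  have hlw : ∀ m : Fin d, ℓ (gdW hd (fun c => B c) m) = w m := by
    intro m
    by_cases h : (m : ℕ) < d - 1
    · rw [gdW, dif_pos h, hlz]
      simp [hvv]
    · have hm : m = kk d hd := Fin.ext (by show (m : ℕ) = d - 1; have := m.isLt; omega)
      rw [gdW, dif_neg h, map_sum, hm, hw]
      refine (sum_shift hd (fun m' => ℓ (B (zI m'))) w fun j hj h2 => ?_).symm
      show w j = ℓ (B (zI ⟨(j : ℕ) + 1, h2⟩))
      rw [hlz]
      simp [hvv]
  have hbrX : ∀ u : Idx d, ⁅B u, X⁆ =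
      ∑ j : Fin d, ((-(α j)) • gdBr hd (fun c => B c) u (xI j)
        + ξ j • gdBr hd (fun c => B c) u (yoI j)) := by
    intro u
    rw [hX, lie_sum']
    refine Finset.sum_congr rfl fun j _ => ?_
    rw [lie_add, lie_smul, lie_smul, hbr, hbr]
  refine ⟨coad X ℓ, ⟨X, ℓ, rfl⟩, ?_⟩
  funext u
  rcases u with i | m | m | m
  · show ℓ ⁅B (zI i), X⁆ = 0
    rw [hbrX]
    refine (map_sum ℓ _ _).trans (Finset.sum_eq_zero fun j _ => ?_)
    rw [gdBr_z, gdBr_z]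
    simp
  · show ℓ ⁅B (yoI m), X⁆ = α m
    have hYo : ⁅B (yoI m), X⁆ = α m • B (zI ⟨0, by omega⟩) := by
      rw [hbrX]
      rw [Finset.sum_eq_single m (fun j _ hj => by
            rw [gdBr_yo_x, gdBr_yo_yo, if_neg hj]; simp)
          (fun h => absurd (Finset.mem_univ m) h)]
      rw [gdBr_yo_x, gdBr_yo_yo, if_pos rfl]
      simp
    rw [hYo, map_smul, smul_eq_mul, hlz0, mul_one]
  · show ℓ ⁅B (yeI m), X⁆ = α m * w m
    have hYe : ⁅B (yeI m), X⁆ = α m • gdW hd (fun c => B c) m := by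
      rw [hbrX]
      rw [Finset.sum_eq_single m (fun j _ hj => by
            rw [gdBr_ye_x, gdBr_ye_yo, if_neg hj]; simp)
          (fun h => absurd (Finset.mem_univ m) h)]
      rw [gdBr_ye_x, gdBr_ye_yo, if_pos rfl]
      simp
    rw [hYe, map_smul, smul_eq_mul, hlw]
  · show ℓ ⁅B (xI m), X⁆ = ξ m
    have hXm : ⁅B (xI m), X⁆ = ξ m • B (zI ⟨0, by omega⟩) := by
      rw [hbrX]
      rw [Finset.sum_eq_single m (fun j _ hj => by
            rw [gdBr_x_x, gdBr_x_yo, if_neg (fun he => hj he.symm)]; simp)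
          (fun h => absurd (Finset.mem_univ m) h)]
      rw [gdBr_x_x, gdBr_x_yo, if_pos rfl]
      simp
    rw [hXm, map_smul, smul_eq_mul, hlz0, mul_one]

lemma adStar_sub (hd : 2 ≤ d) (B : Module.Basis (Idx d) ℝ L)
    (hbr : ∀ a b : Idx d, ⁅B a, B b⁆ = gdBr hd (fun c => B c) a b)
    (g : Module.Dual ℝ L) (hg : g ∈ adStar L) :
    (∀ i : Fin d, g (B (zI i)) = 0) ∧
      Qd d hd (fun i => g (B (yoI i))) (fun i => g (B (yeI i))) = 0 := by
  classical
  obtain ⟨X, ℓ, rfl⟩ := hg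
  have e1 : ∀ i : Fin d, (Sum.inl i : Idx d) = zI i := fun _ => rfl
  have e2 : ∀ i : Fin d, (Sum.inr (Sum.inl i) : Idx d) = yoI i := fun _ => rfl
  have e3 : ∀ i : Fin d, (Sum.inr (Sum.inr (Sum.inl i)) : Idx d) = yeI i := fun _ => rfl
  have e4 : ∀ i : Fin d, (Sum.inr (Sum.inr (Sum.inr i)) : Idx d) = xI i := fun _ => rfl
  have key : ∀ u : Idx d, coad X ℓ (B u) =
      ∑ v : Idx d, B.repr X v * ℓ (gdBr hd (fun c => B c) u v) := by
    intro u
    show ℓ ⁅B u, X⁆ = _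
    conv_lhs => rw [← Module.Basis.sum_repr B X]
    rw [lie_sum', map_sum]
    refine Finset.sum_congr rfl fun v _ => ?_
    rw [lie_smul, hbr, map_smul, smul_eq_mul]
  set t : ℝ := ℓ (B (zI ⟨0, by omega⟩)) with ht
  set α : Fin d → ℝ := fun m => -(B.repr X (xI m)) with hα
  set w : Fin d → ℝ := fun m => ℓ (gdW hd (fun c => B c) m) with hwdef
  have hz : ∀ i : Fin d, coad X ℓ (B (zI i)) = 0 := by
    intro i
    rw [key]
    refine Finset.sum_eq_zero fun v _ => ?_
    rw [gdBr_z, map_zero, mul_zero]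
  have hyo : ∀ m : Fin d, coad X ℓ (B (yoI m)) = α m * t := by
    intro m
    rw [key, Fintype.sum_sum_type, Fintype.sum_sum_type, Fintype.sum_sum_type]
    simp only [e1, e2, e3, e4, gdBr_yo_z, gdBr_yo_yo, gdBr_yo_ye, map_zero, mul_zero,
      Finset.sum_const_zero, zero_add, add_zero]
    rw [Finset.sum_eq_single m (fun j _ hj => by
          rw [gdBr_yo_x, if_neg hj, map_zero, mul_zero])
        (fun h => absurd (Finset.mem_univ m) h)]
    rw [gdBr_yo_x, if_pos rfl, map_neg]
    have : ℓ (B (zI ⟨0, by omega⟩)) = t := rfl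
    rw [this, hα]
    ring
  have hye : ∀ m : Fin d, coad X ℓ (B (yeI m)) = α m * w m := by
    intro m
    rw [key, Fintype.sum_sum_type, Fintype.sum_sum_type, Fintype.sum_sum_type]
    simp only [e1, e2, e3, e4, gdBr_ye_z, gdBr_ye_yo, gdBr_ye_ye, map_zero, mul_zero,
      Finset.sum_const_zero, zero_add, add_zero]
    rw [Finset.sum_eq_single m (fun j _ hj => by
          rw [gdBr_ye_x, if_neg hj, map_zero, mul_zero])
        (fun h => absurd (Finset.mem_univ m) h)]
    rw [gdBr_ye_x, if_pos rfl, map_neg]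
    have : ℓ (gdW hd (fun c => B c) m) = w m := rfl
    rw [this, hα]
    ring
  have hwk : w (kk d hd) = ∑ j ∈ sS d, w j := by
    have h1 : w (kk d hd) = ℓ (gdW hd (fun c => B c) (kk d hd)) := rfl
    rw [h1, gdW, dif_neg (by simp [kk] : ¬ ((kk d hd : ℕ) < d - 1)), map_sum]
    refine (sum_shift hd (fun m' => ℓ (B (zI m'))) w fun j hj h2 => ?_).symm
    show ℓ (gdW hd (fun c => B c) j) = _
    rw [gdW, dif_pos hj]
  refine ⟨hz, ?_⟩
  have f1 : (fun i : Fin d => coad X ℓ (B (yoI i))) = fun i => α i * t := funext hyo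
  have f2 : (fun i : Fin d => coad X ℓ (B (yeI i))) = fun i => α i * w i := funext hye
  rw [f1, f2]
  exact Qzero hd α w t hwk

end Lie

open Filter Topology

lemma closedC (d : ℕ) (hd : 2 ≤ d) :
    IsClosed {c : Idx d → ℝ | (∀ i : Fin d, c (zI i) = 0) ∧
      Qd d hd (fun i => c (yoI i)) (fun i => c (yeI i)) = 0} := by
  have h1 : IsClosed {c : Idx d → ℝ | ∀ i : Fin d, c (zI i) = 0} := by
    have he : {c : Idx d → ℝ | ∀ i : Fin d, c (zI i) = 0}
        = ⋂ i : Fin d, {c : Idx d → ℝ | c (zI i) = 0} := by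
      ext c; simp
    rw [he]
    exact isClosed_iInter fun i => isClosed_eq (continuous_apply (zI i)) continuous_const
  have h2 : IsClosed {c : Idx d → ℝ |
      Qd d hd (fun i => c (yoI i)) (fun i => c (yeI i)) = 0} := by
    refine isClosed_eq ?_ continuous_const
    unfold Qd
    refine Continuous.sub (Continuous.mul (continuous_apply _)
        (continuous_finset_sum _ fun i _ => Continuous.mul (continuous_apply _)
          (continuous_finset_prod _ fun j _ => continuous_apply _)))
      (Continuous.mul (continuous_apply _)
        (continuous_finset_prod _ fun j _ => continuous_apply _))
  exact IsClosed.inter h1 h2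

/-- For every `d ≥ 2`, the cortex of `𝔤_d*` is the projective algebraic set
`{ℓ : ℓ(Z_1) = ⋯ = ℓ(Z_d) = 0 and Q_d(ℓ(Y_1),…,ℓ(Y_{2d})) = 0}`, where `Q_d` is the
homogeneous polynomial of degree `d` of the statement. -/
theorem cortex_gd (d : ℕ) (hd : 2 ≤ d) (L : Type) [LieRing L] [LieAlgebra ℝ L]
    (B : Module.Basis (Idx d) ℝ L)
    (hbr : ∀ a b : Idx d, ⁅B a, B b⁆ = gdBr hd (fun c => B c) a b) :
    corSet B = {f : Module.Dual ℝ L |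
        (∀ i : Fin d, f (B (zI i)) = 0) ∧
        Qd d hd (fun i => f (B (yoI i))) (fun i => f (B (yeI i))) = 0} := by
  classical
  ext f
  simp only [corSet, Set.mem_setOf_eq]
  constructor
  · intro hf
    have hsub : coords B '' adStar L ⊆ {c : Idx d → ℝ | (∀ i : Fin d, c (zI i) = 0) ∧
        Qd d hd (fun i => c (yoI i)) (fun i => c (yeI i)) = 0} := by
      rintro c ⟨g, hg, rfl⟩
      exact adStar_sub hd B hbr g hg
    exact closure_minimal hsub (closedC d hd) hf
  · rintro ⟨hfz, hfQ⟩
    set ηo : Fin d → ℝ := fun i => f (B (yoI i)) with hηo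
    set ηe : Fin d → ℝ := fun i => f (B (yeI i)) with hηe
    set ξ : Fin d → ℝ := fun i => f (B (xI i)) with hξ
    have hQ : Qd d hd ηo ηe = 0 := hfQ
    by_cases hA : ∀ j, ηo j = 0 → ηe j = 0
    · -- Case A : exact realization
      have h1 : (∃ j, ηo j = 0) ∨
          ∑ j ∈ sS d, ηe j / ηo j = ηe (kk d hd) / ηo (kk d hd) := by
        by_cases hz : ∃ j, ηo j = 0
        · exact Or.inl hz
        · push_neg at hz
          exact Or.inr (div_of_Q hd ηo ηe hz hQ)
      obtain ⟨w, hw1, hw2⟩ := solv hd ηo ηe hA h1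
      have hmem := realize hd B hbr ηo w ξ hw2
      have hcf : coords B f = pt ηo w ξ := by
        funext u
        rcases u with i | m | m | m
        · exact hfz i
        · rfl
        · exact (hw1 m).symm
        · rfl
      rw [hcf]
      exact subset_closure hmem
    · push_neg at hA
      obtain ⟨j0, hj00, hj0e⟩ := hA
      by_cases hB : ∃ j1, ηo j1 = 0 ∧ ηe j1 = 0
      · -- Case B1
        obtain ⟨j1, hj1o, hj1e⟩ := hB
        set An : ℕ → Fin d → ℝ :=
          fun n j => if ηo j = 0 ∧ j ≠ j1 then (1 : ℝ) / (n + 1) else ηo j with hAn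
        have h0 : ∀ n j, An n j = 0 → ηe j = 0 := by
          intro n j hj
          simp only [hAn] at hj
          by_cases hc : ηo j = 0 ∧ j ≠ j1
          · rw [if_pos hc] at hj
            exact absurd hj (by positivity)
          · rw [if_neg hc] at hj
            push_neg at hc
            rw [hc hj]
            exact hj1e
        have hAj1 : ∀ n, An n j1 = 0 := by
          intro n
          simp only [hAn]
          rw [if_neg (fun hc : ηo j1 = 0 ∧ j1 ≠ j1 => hc.2 rfl)]
          exact hj1o
        choose wn hw1 hw2 using fun n =>
          solv hd (An n) ηe (h0 n) (Or.inl ⟨j1, hAj1 n⟩)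
        refine mem_closure_of_tendsto (b := (atTop : Filter ℕ))
          (f := fun n => pt (An n) (wn n) ξ) ?_
          (Filter.Eventually.of_forall fun n => realize hd B hbr _ _ _ (hw2 n))
        rw [tendsto_pi_nhds]
        intro u
        rcases u with i | m | m | m
        · show Tendsto (fun _ : ℕ => (0 : ℝ)) atTop (𝓝 (coords B f (Sum.inl i)))
          have h00 : coords B f (Sum.inl i) = 0 := hfz i
          rw [h00]
          exact tendsto_const_nhds
        · show Tendsto (fun n => An n m) atTop (𝓝 (ηo m))
          by_cases hc : ηo m = 0 ∧ m ≠ j1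
          · have he : (fun n => An n m) = fun n : ℕ => (1 : ℝ) / (n + 1) :=
              funext fun n => by simp only [hAn]; rw [if_pos hc]
            rw [he, hc.1]
            exact tendsto_one_div_add_atTop_nhds_zero_nat
          · have he : (fun n => An n m) = fun _ : ℕ => ηo m :=
              funext fun n => by simp only [hAn]; rw [if_neg hc]
            rw [he]
            exact tendsto_const_nhds
        · show Tendsto (fun n => An n m * wn n m) atTop (𝓝 (ηe m))
          have he : (fun n => An n m * wn n m) = fun _ : ℕ => ηe m :=
            funext fun n => hw1 n m
          rw [he]
          exact tendsto_const_nhds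
        · exact tendsto_const_nhds
      · -- Case B2
        push_neg at hB
        have hj1ex : ∃ j1, j1 ∈ sS d ∧ ηo j1 = 0 := by
          rcases mem_sS_or_eq hd j0 with h | h
          · exact ⟨j0, h, hj00⟩
          · by_contra hno
            push_neg at hno
            have hko : ηo (kk d hd) = 0 := by rw [← h]; exact hj00
            exact hB (kk d hd) hko (fact1 hd ηo ηe hQ (fun j hj => hno j hj) hko)
        obtain ⟨j1, hj1s, hj1o⟩ := hj1ex
        have hj1e : ηe j1 ≠ 0 := hB j1 hj1o
        have hkj1 : kk d hd ≠ j1 := fun he => kk_not_mem_sS hd (by rw [he]; exact hj1s)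
        have hj2ex : ∃ j2, j2 ≠ j1 ∧ ηo j2 = 0 := by
          by_contra hno
          push_neg at hno
          exact hj1e (fact2 hd ηo ηe hQ j1 hj1s hno hj1o)
        obtain ⟨j2, hj21, hj2o⟩ := hj2ex
        set bA : ℕ → Fin d → ℝ := fun n j => if ηo j = 0 then
            (if j = kk d hd then ηe j * (1 / (n + 1)) else -(ηe j * (1 / (n + 1))))
          else ηo j with hbA
        set cn : ℕ → ℝ := fun n =>
          ηe (kk d hd) / bA n (kk d hd) - ∑ j ∈ (sS d).erase j1, ηe j / bA n j with hcn
        set Zs : Finset (Fin d) := ((sS d).erase j1).filter (fun j => ηo j = 0) with hZs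
        set M : ℕ := Zs.card + (if ηo (kk d hd) = 0 then 1 else 0) with hM
        set C : ℝ := (if ηo (kk d hd) = 0 then 0 else ηe (kk d hd) / ηo (kk d hd))
          - ∑ j ∈ ((sS d).erase j1).filter (fun j => ¬ ηo j = 0), ηe j / ηo j with hC
        have hterm : ∀ n : ℕ, ∀ j ∈ (sS d).erase j1,
            ηe j / bA n j = if ηo j = 0 then -((n : ℝ) + 1) else ηe j / ηo j := by
          intro n j hj
          have hjk : j ≠ kk d hd := fun he =>
            kk_not_mem_sS hd (by rw [← he]; exact (Finset.mem_erase.1 hj).2)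
          by_cases hz : ηo j = 0
          · simp only [hbA]
            rw [if_pos hz, if_pos hz, if_neg hjk, mul_one_div, div_neg,
              div_div_eq_mul_div, mul_comm (ηe j) ((n : ℝ) + 1), mul_div_assoc,
              div_self (hB j hz), mul_one]
          · simp only [hbA]
            rw [if_neg hz, if_neg hz]
        have hMpos : 1 ≤ M := by
          rw [hM]
          by_cases hk : ηo (kk d hd) = 0
          · rw [if_pos hk]; omega
          · rw [if_neg hk]
            have hj2k : j2 ≠ kk d hd := fun he => hk (by rw [← he]; exact hj2o)
            have hj2s : j2 ∈ sS d := (mem_sS_or_eq hd j2).resolve_right hj2k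
            have : j2 ∈ Zs := by
              rw [hZs, Finset.mem_filter, Finset.mem_erase]
              exact ⟨⟨hj21, hj2s⟩, hj2o⟩
            have := Finset.card_pos.2 ⟨j2, this⟩
            omega
        have hcval : ∀ n : ℕ, cn n = (M : ℝ) * ((n : ℝ) + 1) + C := by
          intro n
          have hsplit : ∑ j ∈ (sS d).erase j1, ηe j / bA n j
              = (Zs.card : ℝ) * (-((n : ℝ) + 1))
                + ∑ j ∈ ((sS d).erase j1).filter (fun j => ¬ ηo j = 0), ηe j / ηo j := by
            rw [← Finset.sum_filter_add_sum_filter_not ((sS d).erase j1) (fun j => ηo j = 0)]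
            congr 1
            · rw [Finset.sum_congr rfl (fun j hj => by
                rw [hterm n j (Finset.mem_filter.1 hj).1, if_pos (Finset.mem_filter.1 hj).2]),
                Finset.sum_const, nsmul_eq_mul]
            · exact Finset.sum_congr rfl (fun j hj => by
                rw [hterm n j (Finset.mem_filter.1 hj).1, if_neg (Finset.mem_filter.1 hj).2])
          simp only [hcn]
          rw [hsplit]
          by_cases hk : ηo (kk d hd) = 0
          · have h1 : bA n (kk d hd) = ηe (kk d hd) * (1 / ((n : ℝ) + 1)) := by
              simp [hbA, hk]
            have h2 : ηe (kk d hd) / (ηe (kk d hd) * (1 / ((n : ℝ) + 1))) = (n : ℝ) + 1 := by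
              rw [mul_one_div, div_div_eq_mul_div, mul_comm (ηe (kk d hd)) ((n : ℝ) + 1),
                mul_div_assoc, div_self (hB _ hk), mul_one]
            rw [h1, h2, hM, hC, if_pos hk, if_pos hk]
            push_cast
            ring
          · have h1 : bA n (kk d hd) = ηo (kk d hd) := by
              simp [hbA, hk]
            rw [h1, hM, hC, if_neg hk, if_neg hk]
            push_cast
            ring
        have hclim : Tendsto cn atTop atTop := by
          rw [show cn = fun n : ℕ => (M : ℝ) * ((n : ℝ) + 1) + C from funext hcval]
          apply tendsto_atTop_add_const_right
          have hM0 : (0 : ℝ) < (M : ℝ) := by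
            exact_mod_cast Nat.lt_of_lt_of_le Nat.zero_lt_one hMpos
          refine Tendsto.const_mul_atTop hM0 ?_
          exact tendsto_atTop_add_const_right _ 1 tendsto_natCast_atTop_atTop
        have hcne : ∀ᶠ n in atTop, cn n ≠ 0 :=
          (hclim.eventually_gt_atTop 0).mono fun n hn => ne_of_gt hn
        set αn : ℕ → Fin d → ℝ :=
          fun n j => if j = j1 then ηe j1 / cn n else bA n j with hαn
        set wn : ℕ → Fin d → ℝ := fun n j => if j = kk d hd
          then ∑ j' ∈ sS d, ηe j' / αn n j' else ηe j / αn n j with hwn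
        have hwcon : ∀ n, wn n (kk d hd) = ∑ j ∈ sS d, wn n j := by
          intro n
          simp only [hwn]
          exact Finset.sum_congr rfl fun j hj =>
            (if_neg (fun he => kk_not_mem_sS hd (by rw [← he]; exact hj))).symm
        have hαne : ∀ᶠ n in atTop, ∀ j, αn n j ≠ 0 := by
          refine hcne.mono fun n hn j => ?_
          simp only [hαn]
          by_cases hj : j = j1
          · rw [if_pos hj]; exact div_ne_zero hj1e hn
          · rw [if_neg hj]
            simp only [hbA]
            by_cases hz : ηo j = 0
            · rw [if_pos hz]
              have hη : ηe j ≠ 0 := hB j hz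
              have hn1 : (1 : ℝ) / ((n : ℝ) + 1) ≠ 0 := by positivity
              by_cases hk : j = kk d hd
              · rw [if_pos hk]; exact mul_ne_zero hη hn1
              · rw [if_neg hk]; exact neg_ne_zero.2 (mul_ne_zero hη hn1)
            · rw [if_neg hz]; exact hz
        have hye_eq : ∀ᶠ n in atTop, ∀ m, αn n m * wn n m = ηe m := by
          filter_upwards [hcne, hαne] with n hn hα
          intro m
          by_cases hm : m = kk d hd
          · subst hm
            have hsum : ∑ j' ∈ sS d, ηe j' / αn n j'
                = ηe (kk d hd) / αn n (kk d hd) := by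
              rw [← Finset.add_sum_erase _ _ hj1s]
              have hx1 : ηe j1 / αn n j1 = cn n := by
                have hv : αn n j1 = ηe j1 / cn n := by simp [hαn]
                rw [hv, div_div_eq_mul_div, mul_div_cancel_left₀ _ hj1e]
              have hx2 : ∑ j ∈ (sS d).erase j1, ηe j / αn n j
                  = ηe (kk d hd) / bA n (kk d hd) - cn n := by
                have hstep : ∀ j ∈ (sS d).erase j1, ηe j / αn n j = ηe j / bA n j :=
                  fun j hj => by
                    simp only [hαn]
                    rw [if_neg (Finset.mem_erase.1 hj).1]
                rw [Finset.sum_congr rfl hstep]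
                simp only [hcn]
                ring
              have hx3 : αn n (kk d hd) = bA n (kk d hd) := by
                simp only [hαn]; rw [if_neg hkj1]
              rw [hx1, hx2, hx3]
              ring
            simp only [hwn, eq_self_iff_true, if_true]
            rw [hsum, mul_div_cancel₀ _ (hα _)]
          · simp only [hwn]
            rw [if_neg hm, mul_div_cancel₀ _ (hα m)]
        refine mem_closure_of_tendsto (b := (atTop : Filter ℕ))
          (f := fun n => pt (αn n) (wn n) ξ) ?_
          (Filter.Eventually.of_forall fun n => realize hd B hbr _ _ _ (hwcon n))
        rw [tendsto_pi_nhds]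
        intro u
        rcases u with i | m | m | m
        · show Tendsto (fun _ : ℕ => (0 : ℝ)) atTop (𝓝 (coords B f (Sum.inl i)))
          have h00 : coords B f (Sum.inl i) = 0 := hfz i
          rw [h00]
          exact tendsto_const_nhds
        · show Tendsto (fun n => αn n m) atTop (𝓝 (ηo m))
          by_cases hm : m = j1
          · subst hm
            have he : (fun n => αn n m) = fun n => ηe m / cn n :=
              funext fun n => by simp [hαn]
            rw [he, hj1o]
            exact Tendsto.div_atTop tendsto_const_nhds hclim
          · have he : (fun n => αn n m) = fun n => bA n m :=
              funext fun n => by simp only [hαn]; rw [if_neg hm]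
            rw [he]
            by_cases hz : ηo m = 0
            · by_cases hk : m = kk d hd
              · have he2 : (fun n => bA n m) = fun n : ℕ => ηe m * (1 / ((n : ℝ) + 1)) :=
                  funext fun n => by simp only [hbA]; rw [if_pos hz, if_pos hk]
                rw [he2, hz]
                simpa using (tendsto_one_div_add_atTop_nhds_zero_nat).const_mul (ηe m)
              · have he2 : (fun n => bA n m) = fun n : ℕ => -(ηe m * (1 / ((n : ℝ) + 1))) :=
                  funext fun n => by simp only [hbA]; rw [if_pos hz, if_neg hk]
                rw [he2, hz]
                simpa using ((tendsto_one_div_add_atTop_nhds_zero_nat).const_mul (ηe m)).neg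
            · have he2 : (fun n => bA n m) = fun _ : ℕ => ηo m :=
                funext fun n => by simp only [hbA]; rw [if_neg hz]
              rw [he2]
              exact tendsto_const_nhds
        · show Tendsto (fun n => αn n m * wn n m) atTop (𝓝 (ηe m))
          exact Tendsto.congr' (hye_eq.mono fun n h => (h m).symm) tendsto_const_nhds
        · exact tendsto_const_nhds
end

section
/- For every integer d ≥ 2, every ℓ ∈ 𝔤_d*, and every X ∈ 𝔤_d, the functional f = ad*_X ℓ satisfies f(Z_1) = ⋯ = f(Z_d) = 0 and Q_d(f(Y_1), …, f(Y_{2d})) = 0, where Q_d(η_1,…,η_{2d}) = η_{2d−1}·Σ_{i=1}^{d−1}(η_{2i}·∏_{j=1, j≠i}^{d−1} η_{2j−1}) − η_{2d}·∏_{j=1}^{d−1} η_{2j−1}. In particular, the set {ad*_X ℓ : X ∈ 𝔤_d, ℓ ∈ 𝔤_d*} is contained in the closed set {f ∈ 𝔤_d* : f(Z_i) = 0 for all i and Q_d(f(Y_1),…,f(Y_{2d})) = 0}. -/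
lemma my_lie_sum {L : Type*} [LieRing L] (x : L) {ι : Type*} (s : Finset ι) (f : ι → L) :
    ⁅x, ∑ a ∈ s, f a⁆ = ∑ a ∈ s, ⁅x, f a⁆ := by
  induction s using Finset.cons_induction with
  | empty => simp
  | cons a s ha ih => simp [Finset.sum_cons, lie_add, ih]

lemma qd_zero (d : ℕ) (hd : 2 ≤ d) (c w : Fin d → ℝ) (z : ℝ)
    (hw : w ⟨d - 1, by omega⟩ =
      ∑ i ∈ Finset.univ.filter (fun i : Fin d => (i : ℕ) < d - 1), w i) :
    Qd d hd (fun j => -(c j * z)) (fun j => -(c j * w j)) = 0 := by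
  set S := Finset.univ.filter (fun i : Fin d => (i : ℕ) < d - 1) with hS
  have hfilter : ∀ i : Fin d,
      Finset.univ.filter (fun j : Fin d => (j : ℕ) < d - 1 ∧ j ≠ i) = S.erase i := by
    intro i; ext j; simp [hS, Finset.mem_erase, and_comm]
  unfold Qd
  simp only [hfilter, ← hS]
  have key : ∀ i ∈ S,
      (-(c ⟨d - 1, by omega⟩ * z)) * ((-(c i * w i)) * ∏ j ∈ S.erase i, -(c j * z)) =
      (-(c ⟨d - 1, by omega⟩)) * w i * ∏ j ∈ S, -(c j * z) := by
    intro i hi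
    rw [← Finset.mul_prod_erase _ _ hi]
    ring
  rw [Finset.mul_sum, Finset.sum_congr rfl key, ← Finset.sum_mul, ← Finset.mul_sum, ← hw]
  ring

/-- For every `d ≥ 2`, every `ℓ ∈ 𝔤_d*` and every `X ∈ 𝔤_d`, the functional
`f = ad*_X ℓ` satisfies `f(Z_1) = ⋯ = f(Z_d) = 0` and `Q_d(f(Y_1),…,f(Y_{2d})) = 0`; in
particular `{ad*_X ℓ}` is contained in the closed set cut out by these equations. -/
theorem adStar_subset_variety_gd (d : ℕ) (hd : 2 ≤ d) (L : Type) [LieRing L]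
    [LieAlgebra ℝ L] (B : Module.Basis (Idx d) ℝ L)
    (hbr : ∀ a b : Idx d, ⁅B a, B b⁆ = gdBr hd (fun c => B c) a b) :
    (∀ (ℓ : Module.Dual ℝ L) (X : L),
        (∀ i : Fin d, coad X ℓ (B (zI i)) = 0) ∧
        Qd d hd (fun i => coad X ℓ (B (yoI i))) (fun i => coad X ℓ (B (yeI i))) = 0)
    ∧ adStar L ⊆ {f : Module.Dual ℝ L |
        (∀ i : Fin d, f (B (zI i)) = 0) ∧
        Qd d hd (fun i => f (B (yoI i))) (fun i => f (B (yeI i))) = 0} := by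
  have main : ∀ (ℓ : Module.Dual ℝ L) (X : L),
      (∀ i : Fin d, coad X ℓ (B (zI i)) = 0) ∧
      Qd d hd (fun i => coad X ℓ (B (yoI i))) (fun i => coad X ℓ (B (yeI i))) = 0 := by
    intro ℓ X
    have hval : ∀ w : Idx d,
        coad X ℓ (B w) = ∑ a, B.repr X a * ℓ (gdBr hd (fun c => B c) w a) := by
      intro w
      show ℓ ⁅B w, X⁆ = _
      conv_lhs => rw [← B.sum_repr X]
      rw [my_lie_sum, map_sum]
      simp [lie_smul, hbr]
    have hz : ∀ i : Fin d, coad X ℓ (B (zI i)) = 0 := by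
      intro i
      rw [hval]
      have h0 : ∀ a : Idx d, gdBr hd (fun c => B c) (zI i) a = 0 := by
        intro a
        rcases a with _ | _ | _ | _ <;> rfl
      simp [h0]
    refine ⟨hz, ?_⟩
    have hyo : ∀ j : Fin d,
        coad X ℓ (B (yoI j)) = -(B.repr X (xI j) * ℓ (B (zI ⟨0, by omega⟩))) := by
      intro j
      rw [hval]
      rw [Fintype.sum_sum_type, Fintype.sum_sum_type, Fintype.sum_sum_type]
      have h1 : ∀ i : Fin d, gdBr hd (fun c => B c) (yoI j) (zI i) = 0 := fun _ => rfl
      have h2 : ∀ i : Fin d, gdBr hd (fun c => B c) (yoI j) (yoI i) = 0 := fun _ => rfl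
      have h3 : ∀ i : Fin d, gdBr hd (fun c => B c) (yoI j) (yeI i) = 0 := fun _ => rfl
      have h4 : ∀ i : Fin d, gdBr hd (fun c => B c) (yoI j) (xI i) =
          if i = j then -(B (zI ⟨0, by omega⟩)) else 0 := fun _ => rfl
      simp only [zI, yoI, yeI, xI] at h1 h2 h3 h4 ⊢
      simp [h1, h2, h3, h4, apply_ite ℓ, mul_ite, Finset.sum_ite_eq']
    have hye : ∀ j : Fin d,
        coad X ℓ (B (yeI j)) = -(B.repr X (xI j) * ℓ (gdW hd (fun c => B c) j)) := by
      intro j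
      rw [hval]
      rw [Fintype.sum_sum_type, Fintype.sum_sum_type, Fintype.sum_sum_type]
      have h1 : ∀ i : Fin d, gdBr hd (fun c => B c) (yeI j) (zI i) = 0 := fun _ => rfl
      have h2 : ∀ i : Fin d, gdBr hd (fun c => B c) (yeI j) (yoI i) = 0 := fun _ => rfl
      have h3 : ∀ i : Fin d, gdBr hd (fun c => B c) (yeI j) (yeI i) = 0 := fun _ => rfl
      have h4 : ∀ i : Fin d, gdBr hd (fun c => B c) (yeI j) (xI i) =
          if i = j then -(gdW hd (fun c => B c) i) else 0 := fun _ => rfl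
      simp only [zI, yoI, yeI, xI] at h1 h2 h3 h4 ⊢
      simp [h1, h2, h3, h4, apply_ite ℓ, mul_ite, Finset.sum_ite_eq']
    set c : Fin d → ℝ := fun j => B.repr X (xI j) with hc
    set z : ℝ := ℓ (B (zI ⟨0, by omega⟩)) with hzz
    set w : Fin d → ℝ := fun j => ℓ (gdW hd (fun c => B c) j) with hwdef
    have hwi : ∀ (i : Fin d) (_h : (i : ℕ) < d - 1),
        w i = ℓ (B (zI ⟨(i : ℕ) + 1, by omega⟩)) := by
      intro i hi
      simp [hwdef, gdW, hi]
    have hw : w ⟨d - 1, by omega⟩ =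
        ∑ i ∈ Finset.univ.filter (fun i : Fin d => (i : ℕ) < d - 1), w i := by
      have hlast : w ⟨d - 1, by omega⟩ =
          ∑ m ∈ Finset.univ.filter (fun m : Fin d => 0 < (m : ℕ)), ℓ (B (zI m)) := by
        simp [hwdef, gdW, map_sum]
      rw [hlast]
      refine Finset.sum_nbij' (fun m => ⟨(m : ℕ) - 1, by omega⟩)
        (fun i => if h : (i : ℕ) + 1 < d then ⟨(i : ℕ) + 1, h⟩ else ⟨0, by omega⟩)
        ?_ ?_ ?_ ?_ ?_
      · intro m hm; simp only [Finset.mem_filter, Finset.mem_univ, true_and] at hm ⊢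
        have := m.isLt; omega
      · intro i hi; simp only [Finset.mem_filter, Finset.mem_univ, true_and] at hi ⊢
        rw [dif_pos (by omega)]; simp
      · intro m hm; simp only [Finset.mem_filter, Finset.mem_univ, true_and] at hm
        beta_reduce; rw [dif_pos (by have := m.isLt; simp; omega)]
        ext; simp; omega
      · intro i hi; simp only [Finset.mem_filter, Finset.mem_univ, true_and] at hi
        beta_reduce; rw [dif_pos (by omega)]; ext; simp
      · intro m hm; simp only [Finset.mem_filter, Finset.mem_univ, true_and] at hm
        rw [hwi ⟨(m : ℕ) - 1, by omega⟩ (by simp; have := m.isLt; omega)]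
        congr 2
        simp [zI, Fin.ext_iff]
        omega
    have ho : (fun i => coad X ℓ (B (yoI i))) = fun j => -(c j * z) := funext hyo
    have he : (fun i => coad X ℓ (B (yeI i))) = fun j => -(c j * w j) := funext hye
    rw [ho, he]
    exact qd_zero d hd c w z hw
  refine ⟨main, ?_⟩
  rintro g ⟨X, ℓ, rfl⟩
  exact main ℓ X
end
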